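/- Let G be a cactus graph and let C be an induced cycle of G. If F ⊆ V(G) is a set of filled vertices containing at least two vertices of C, then repeated application of the positive semidefinite color change rule starting from F eventually fills all vertices of C. -/

import Mathlib

namespace ZqForcing

variable {V : Type*}

/-- `u` forces `v` within the allowed vertex set `A`, given the filled set `F`:
`u` is filled, `v` is its unique unfilled neighbor inside `A`. -/
def forceIn (G : SimpleGraph V) (A F : Set V) (u v : V) : Prop :=
  u ∈ A ∧ v ∈ A ∧ u ∈ F ∧ v ∉ F ∧ G.Adj u v ∧
    ∀ w ∈ A, G.Adj u w → w ∉ F → w = v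

/-- One step of the standard zero forcing color change rule. -/
def zfStep (G : SimpleGraph V) (F F' : Set V) : Prop :=
  ∃ u v, forceIn G Set.univ F u v ∧ F' = insert v F

/-- `S` is a zero forcing set: repeated color changes fill all of `V`. -/
def IsZeroForcingSet (G : SimpleGraph V) (S : Set V) : Prop :=
  Relation.ReflTransGen (zfStep G) S Set.univ

/-- The zero forcing number `Z(G)`. -/
noncomputable def zeroForcingNumber (G : SimpleGraph V) : ℕ :=
  sInf {n | ∃ S : Set V, S.ncard = n ∧ IsZeroForcingSet G S}

/-- Reachability in `G - F`, i.e. through vertices avoiding `F`. -/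
def reachAvoid (G : SimpleGraph V) (F : Set V) : V → V → Prop :=
  Relation.ReflTransGen (fun a b => G.Adj a b ∧ a ∉ F ∧ b ∉ F)

/-- The positive semidefinite color change rule: filled `u` forces unfilled `v` when `v`
is the unique neighbor of `u` in the connected component of `G - F` containing `v`. -/
def psdForce (G : SimpleGraph V) (F : Set V) (u v : V) : Prop :=
  u ∈ F ∧ v ∉ F ∧ G.Adj u v ∧
    ∀ w, G.Adj u w → w ∉ F → reachAvoid G F v w → w = v

/-- One step of the positive semidefinite color change rule. -/
def psdStep (G : SimpleGraph V) (F F' : Set V) : Prop :=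
  ∃ u v, psdForce G F u v ∧ F' = insert v F

/-- `S` is a positive semidefinite zero forcing set. -/
def IsPSDForcingSet (G : SimpleGraph V) (S : Set V) : Prop :=
  Relation.ReflTransGen (psdStep G) S Set.univ

/-- The positive semidefinite zero forcing number `Z₊(G)`. -/
noncomputable def psdZeroForcingNumber (G : SimpleGraph V) : ℕ :=
  sInf {n | ∃ S : Set V, S.ncard = n ∧ IsPSDForcingSet G S}

/-- The vertex sets of the connected components of the subgraph induced on
the unfilled vertices. -/
def unfilledComponents (G : SimpleGraph V) (F : Set V) : Set (Set V) :=
  {C | ∃ v, v ∉ F ∧ C = {w | reachAvoid G F v w}}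

/-- A forcing step performed inside the induced subgraph on the vertex set `A`. -/
def rule3Step (G : SimpleGraph V) (A F F' : Set V) : Prop :=
  ∃ u v, forceIn G A F u v ∧ F' = insert v F

/-- `ZqWinFrom G q F t`: starting from the filled set `F`, the player can guarantee to
fill all vertices using at most `t` further tokens against every oracle strategy, in the
`q`-analogue zero forcing game. -/
inductive ZqWinFrom (G : SimpleGraph V) (q : ℕ) : Set V → ℕ → Prop
  | done (t : ℕ) : ZqWinFrom G q Set.univ t
  | rule1 {F : Set V} {t : ℕ} (v : V) (hv : v ∉ F)
      (h : ZqWinFrom G q (insert v F) t) : ZqWinFrom G q F (t + 1)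
  | rule2 {F : Set V} {t : ℕ} (u v : V) (huv : forceIn G Set.univ F u v)
      (h : ZqWinFrom G q (insert v F) t) : ZqWinFrom G q F t
  | rule3 {F : Set V} {t : ℕ} (𝒞 : Set (Set V))
      (h𝒞 : 𝒞 ⊆ unfilledComponents G F) (hcard : q + 1 ≤ 𝒞.ncard)
      (next : ∀ 𝒮 : Set (Set V), 𝒮 ⊆ 𝒞 → 𝒮.Nonempty → Set V)
      (hnext : ∀ (𝒮 : Set (Set V)) (h1 : 𝒮 ⊆ 𝒞) (h2 : 𝒮.Nonempty),
        Relation.ReflTransGen (rule3Step G (F ∪ ⋃₀ 𝒮)) F (next 𝒮 h1 h2))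
      (h : ∀ (𝒮 : Set (Set V)) (h1 : 𝒮 ⊆ 𝒞) (h2 : 𝒮.Nonempty),
        ZqWinFrom G q (next 𝒮 h1 h2) t) :
      ZqWinFrom G q F t

/-- The `q`-analogue zero forcing number `Z_q(G)`. -/
noncomputable def qZeroForcingNumber (G : SimpleGraph V) (q : ℕ) : ℕ :=
  sInf {t | ZqWinFrom G q ∅ t}

/-- The induced subgraph on `B` is connected and has no cut vertex. -/
def NoCutVertex (G : SimpleGraph V) (B : Set V) : Prop :=
  (G.induce B).Connected ∧
    ∀ v ∈ B, (B \ {v}).Nonempty → (G.induce (B \ {v})).Connected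

/-- `B` is a block of `G`: a maximal (vertex set of a) connected subgraph without
a cut vertex. -/
def IsBlock (G : SimpleGraph V) (B : Set V) : Prop :=
  NoCutVertex G B ∧ ∀ B' : Set V, B ⊆ B' → NoCutVertex G B' → B' = B

/-- A block graph: a connected graph each of whose blocks is a clique. -/
def IsBlockGraph (G : SimpleGraph V) : Prop :=
  G.Connected ∧ ∀ B : Set V, IsBlock G B → G.IsClique B

/-- A cactus graph: connected, and every edge lies on at most one cycle
(cycles being identified when they have the same edge set). -/
def IsCactus (G : SimpleGraph V) : Prop :=
  G.Connected ∧ ∀ (a b : V) (c : G.Walk a a) (d : G.Walk b b),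
    c.IsCycle → d.IsCycle → ∀ e ∈ c.edges, e ∈ d.edges →
      ∀ e', e' ∈ c.edges ↔ e' ∈ d.edges

/-- `c` is an induced (chordless) cycle of `G`. -/
def IsInducedCycle (G : SimpleGraph V) {v : V} (c : G.Walk v v) : Prop :=
  c.IsCycle ∧ ∀ x ∈ c.support, ∀ y ∈ c.support, G.Adj x y → s(x, y) ∈ c.edges

/-- Generalized windmill graph of Type I: η disjoint copies of `K_k` together with
`l` central vertices forming a clique, each central vertex adjacent to everything. -/
def windmillI (η k l : ℕ) : SimpleGraph ((Fin η × Fin k) ⊕ Fin l) :=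
  SimpleGraph.fromRel (fun a b =>
    match a, b with
    | Sum.inl (i, _), Sum.inl (i', _) => i = i'
    | Sum.inr _, Sum.inr _ => True
    | _, _ => True)

/-- Generalized windmill graph of Type II: η disjoint copies of `K_k` together with
`l` pairwise nonadjacent central vertices, each adjacent to every clique vertex. -/
def windmillII (η k l : ℕ) : SimpleGraph ((Fin η × Fin k) ⊕ Fin l) :=
  SimpleGraph.fromRel (fun a b =>
    match a, b with
    | Sum.inl (i, _), Sum.inl (i', _) => i = i'
    | Sum.inr _, Sum.inr _ => False
    | _, _ => True)

/-- Generalized star (spider) graph: a center `none` together with `k` disjoint paths,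
the `i`-th of length `m i`, attached to the center at one endpoint. -/
def spider {k : ℕ} (m : Fin k → ℕ) : SimpleGraph (Option (Σ i : Fin k, Fin (m i))) :=
  SimpleGraph.fromRel (fun a b =>
    match a, b with
    | none, some ⟨_, j⟩ => j.val = 0
    | some ⟨i, j⟩, some ⟨i', j'⟩ => i = i' ∧ j.val + 1 = j'.val
    | _, _ => False)


open SimpleGraph in
/-- From `reachAvoid` extract a walk all of whose vertices avoid `F`. -/
private lemma walk_avoid {G : SimpleGraph V} {F : Set V} {a b : V}
    (h : reachAvoid G F a b) (ha : a ∉ F) :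
    ∃ p : G.Walk a b, ∀ x ∈ p.support, x ∉ F := by
  induction h with
  | refl => exact ⟨Walk.nil, by simpa⟩
  | tail _ h ih =>
    obtain ⟨p, hp⟩ := ih
    refine ⟨p.concat h.1, ?_⟩
    intro x hx
    rw [Walk.support_concat, List.mem_append] at hx
    rcases hx with h' | h'
    · exact hp x h'
    · simp only [List.mem_singleton] at h'
      subst h'
      exact h.2.2

open SimpleGraph in
/-- Every vertex of a nontrivial walk lies on some edge of the walk. -/
private lemma exists_edge_of_mem_support {G : SimpleGraph V} :
    ∀ {a b : V} (p : G.Walk a b), ¬ p.Nil → ∀ x ∈ p.support, ∃ e ∈ p.edges, x ∈ e := by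
  intro a b p
  induction p with
  | nil => intro h; simp at h
  | @cons a b' c h q ih =>
    intro _ x hx
    rw [Walk.support_cons, List.mem_cons] at hx
    rcases hx with rfl | hx
    · exact ⟨s(x, b'), by simp, by simp⟩
    · by_cases hq : q.Nil
      · have : q.support = [b'] := by
          cases q with
          | nil => simp
          | cons h' q' => simp at hq
        rw [this, List.mem_singleton] at hx
        subst hx
        exact ⟨s(a, x), by simp, by simp⟩
      · obtain ⟨e, he, hxe⟩ := ih hq x hx
        exact ⟨e, by simp [he], hxe⟩

open SimpleGraph in
/-- Along a walk from a filled vertex to an unfilled one there is a filled vertex with an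
unfilled neighbor, both on the walk. -/
private lemma cross_walk {G : SimpleGraph V} {F : Set V} :
    ∀ {a b : V} (p : G.Walk a b), a ∈ F → b ∉ F →
      ∃ u w, u ∈ p.support ∧ w ∈ p.support ∧ G.Adj u w ∧ u ∈ F ∧ w ∉ F := by
  intro a b p
  induction p with
  | nil => intro h1 h2; exact absurd h1 h2
  | @cons a b' c h q ih =>
    intro h1 h2
    by_cases hb : b' ∈ F
    · obtain ⟨u, w, hu, hw, hadj, huF, hwF⟩ := ih hb h2
      exact ⟨u, w, by simp [hu], by simp [hw], hadj, huF, hwF⟩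
    · exact ⟨a, b', by simp, by simp, h, h1, hb⟩

open SimpleGraph in
/-- Key step: in a cactus, a filled vertex of an induced cycle with at least two filled
vertices can PSD-force any unfilled neighbor on the cycle. -/
private lemma key_force [Fintype V] {G : SimpleGraph V} (hG : IsCactus G) {vv : V}
    (c : G.Walk vv vv) (hc : IsInducedCycle G c) {F : Set V}
    (hF : 2 ≤ ({x | x ∈ c.support} ∩ F).ncard)
    {u v : V} (hu : u ∈ c.support) (hv : v ∈ c.support) (huv : G.Adj u v)
    (huF : u ∈ F) (hvF : v ∉ F) : psdForce G F u v := by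
  classical
  refine ⟨huF, hvF, huv, ?_⟩
  intro w hadj hwF hreach
  by_contra hne
  obtain ⟨p0, hp0⟩ := walk_avoid hreach hvF
  have hqpath : p0.bypass.IsPath := p0.bypass_isPath
  set q := p0.bypass with hq
  have hqF : ∀ x ∈ q.support, x ∉ F := fun x hx => hp0 x (p0.support_bypass_subset hx)
  have huq : u ∉ q.support := fun h => hqF u h huF
  have hwu : G.Adj w u := hadj.symm
  have hpath2 : (q.concat hwu).IsPath := by
    rw [Walk.isPath_def, Walk.support_concat]
    refine List.Nodup.append hqpath.support_nodup (List.nodup_singleton u) ?_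
    intro x hx hx'
    simp only [List.mem_singleton] at hx'
    subst hx'
    exact huq hx
  have hedge_nin : s(u, v) ∉ (q.concat hwu).edges := by
    rw [Walk.edges_concat, List.concat_eq_append, List.mem_append]
    rintro (h' | h')
    · exact huq (Walk.fst_mem_support_of_mem_edges q h')
    · simp only [List.mem_singleton, Sym2.eq, Sym2.rel_iff', Prod.mk.injEq,
        Prod.swap_prod_mk] at h'
      rcases h' with ⟨rfl, rfl⟩ | ⟨h1, h2⟩
      · exact hadj.ne rfl
      · exact hne h2.symm
  have hd : (Walk.cons huv (q.concat hwu)).IsCycle :=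
    (Walk.cons_isCycle_iff _ huv).mpr ⟨hpath2, hedge_nin⟩
  have hsc : s(u, v) ∈ c.edges := hc.2 u hu v hv huv
  have hsd : s(u, v) ∈ (Walk.cons huv (q.concat hwu)).edges := by
    rw [Walk.edges_cons]; exact List.mem_cons_self
  have hiff := hG.2 vv u c (Walk.cons huv (q.concat hwu)) hc.1 hd s(u, v) hsc hsd
  -- a second filled vertex on the cycle, different from `u`
  obtain ⟨a, b, ha, hb, hab⟩ := (Set.one_lt_ncard_iff (Set.toFinite _)).mp
    (lt_of_lt_of_le one_lt_two hF)
  have hu2 : ∃ z, z ∈ ({x | x ∈ c.support} ∩ F) ∧ z ≠ u := by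
    by_cases hau : a = u
    · exact ⟨b, hb, fun h => hab (hau.trans h.symm)⟩
    · exact ⟨a, ha, hau⟩
  obtain ⟨z, ⟨hzs, hzF⟩, hzu⟩ := hu2
  have hcnil : ¬ c.Nil := by
    intro h
    exact hc.1.ne_nil h.eq_nil
  obtain ⟨e, he, hze⟩ := exists_edge_of_mem_support c hcnil z hzs
  have hed : e ∈ (Walk.cons huv (q.concat hwu)).edges := (hiff e).mp he
  obtain ⟨z', rfl⟩ := Sym2.mem_iff_exists.mp hze
  have hzsup : z ∈ (Walk.cons huv (q.concat hwu)).support :=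
    Walk.fst_mem_support_of_mem_edges _ hed
  rw [Walk.support_cons, Walk.support_concat, List.mem_cons,
    List.mem_append, List.mem_singleton] at hzsup
  rcases hzsup with rfl | hzq | rfl
  · exact hzu rfl
  · exact hqF z hzq hzF
  · exact hzu rfl

/-- in a cactus graph, once a filled set `F` contains two vertices of an
induced cycle `C`, repeated PSD color changes eventually fill all of `C`. -/
theorem stmt4 {V : Type*} [Fintype V] (G : SimpleGraph V) (hG : IsCactus G)
    {v : V} (c : G.Walk v v) (hc : IsInducedCycle G c)
    (F : Set V) (hF : 2 ≤ ({x | x ∈ c.support} ∩ F).ncard) :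
    ∃ F', Relation.ReflTransGen (psdStep G) F F' ∧ ∀ x ∈ c.support, x ∈ F' := by
  classical
  suffices H : ∀ n (F : Set V), 2 ≤ ({x | x ∈ c.support} ∩ F).ncard →
      ({x | x ∈ c.support} \ F).ncard = n →
      ∃ F', Relation.ReflTransGen (psdStep G) F F' ∧ ∀ x ∈ c.support, x ∈ F' by
    exact H _ F hF rfl
  intro n
  induction n using Nat.strong_induction_on with
  | _ n ih =>
    intro F hF2 hn
    by_cases hall : ∀ x ∈ c.support, x ∈ F
    · exact ⟨F, Relation.ReflTransGen.refl, hall⟩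
    · push_neg at hall
      obtain ⟨y, hy, hyF⟩ := hall
      have hne : ({x | x ∈ c.support} ∩ F).Nonempty := by
        rw [← Set.ncard_pos (Set.toFinite _)]
        omega
      obtain ⟨x, hxs, hxF⟩ := hne
      -- a walk from x to y inside the support of c
      let p := ((c.takeUntil x hxs).reverse).append (c.takeUntil y hy)
      have hsub : ∀ z ∈ p.support, z ∈ c.support := by
        intro z hz
        rw [SimpleGraph.Walk.mem_support_append_iff] at hz
        rcases hz with hz | hz
        · rw [SimpleGraph.Walk.support_reverse, List.mem_reverse] at hz
          exact SimpleGraph.Walk.support_takeUntil_subset c hxs hz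
        · exact SimpleGraph.Walk.support_takeUntil_subset c hy hz
      obtain ⟨u, w, hup, hwp, hadj, huF, hwF⟩ := cross_walk p hxF hyF
      have hforce : psdForce G F u w :=
        key_force hG c hc hF2 (hsub u hup) (hsub w hwp) hadj huF hwF
      have hstep : psdStep G F (insert w F) := ⟨u, w, hforce, rfl⟩
      have hF2' : 2 ≤ ({x | x ∈ c.support} ∩ insert w F).ncard :=
        le_trans hF2 (Set.ncard_le_ncard
          (Set.inter_subset_inter_right _ (Set.subset_insert _ _)) (Set.toFinite _))
      have hdec : ({x | x ∈ c.support} \ insert w F).ncard < n := by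
        rw [← hn]
        apply Set.ncard_lt_ncard _ (Set.toFinite _)
        constructor
        · exact Set.diff_subset_diff_right (Set.subset_insert _ _)
        · intro hsub'
          have hw1 : w ∈ {x | x ∈ c.support} \ F := ⟨hsub w hwp, hwF⟩
          have hw2 := hsub' hw1
          exact hw2.2 (Set.mem_insert _ _)
      obtain ⟨F', hF', hall'⟩ := ih _ hdec (insert w F) hF2' rfl
      exact ⟨F', Relation.ReflTransGen.head hstep hF', hall'⟩

end ZqForcing
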